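/- (Padding Lemma) Let A ⊆ ℕ be an infinite computably enumerable set and let θ be a quasi-Gödel numbering of S_A. Then θ has a one-to-one padding function: there is a total computable p : ℕ → ℕ → ℕ which is injective as a function of the pair (i,j) and satisfies θ (p i j) = θ i for all i and j. -/

import Mathlib

/-- `r : ℕ →. ℕ` is an initial-segment function for `A`: its domain is empty or
equals `{m | m < a}` for some `a ∈ A`. -/
def IsInitSeg (A : Set ℕ) (r : ℕ →. ℕ) : Prop :=
  {x : ℕ | (r x).Dom} = (∅ : Set ℕ) ∨ ∃ a ∈ A, {x : ℕ | (r x).Dom} = {m : ℕ | m < a}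

/-- `SA A` is the class of unary partial functions that are either total computable
or initial-segment functions for `A`. -/
def SA (A : Set ℕ) : Set (ℕ →. ℕ) :=
  {r | (∃ f : ℕ → ℕ, Computable f ∧ ∀ x, r x = Part.some (f x)) ∨ IsInitSeg A r}

/-- The extended graph of a unary partial function. -/
def graphE (q : ℕ →. ℕ) : Set ℕ :=
  {n | ∃ y, n = Nat.pair y 0} ∪ {n | ∃ x z, q x = Part.some z ∧ n = Nat.pair x (z + 1)}

/-- The graph of a unary partial function. -/
def pgraph (q : ℕ →. ℕ) : Set ℕ :=
  {n | ∃ x z, q x = Part.some z ∧ n = Nat.pair x z}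

/-- Condition (QGN I): the extended graph of the universal function of `θ` is
enumerated by a total computable function. -/
def QGN1 (θ : ℕ → ℕ →. ℕ) : Prop :=
  ∃ h : ℕ → ℕ, Computable h ∧
    Set.range h = {n | ∃ w, n = Nat.pair w 0} ∪
      {n | ∃ i x z, θ i x = Part.some z ∧ n = Nat.pair (Nat.pair i x) (z + 1)}

/-- Condition (QGN II). -/
def QGN2 (A : Set ℕ) (θ : ℕ → ℕ →. ℕ) : Prop :=
  ∀ k : ℕ → ℕ → ℕ, Computable₂ k →
    ∃ v : ℕ → ℕ, Computable v ∧
      ∀ i, ∀ r ∈ SA A, Set.range (k i) = graphE r → θ (v i) = r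

/-- A quasi-Gödel numbering of `SA A`. -/
def QuasiGodel (A : Set ℕ) (θ : ℕ → ℕ →. ℕ) : Prop :=
  Set.range θ = SA A ∧ QGN1 θ ∧ QGN2 A θ

/-- A set of naturals is computably enumerable. -/
def CEset (C : Set ℕ) : Prop :=
  C = ∅ ∨ ∃ g : ℕ → ℕ, Computable g ∧ C = Set.range g

/-- The standard Gödel numbering of the unary partial recursive functions. -/
def phi (i : ℕ) : ℕ →. ℕ :=
  Nat.Partrec.Code.eval (Denumerable.ofNat Nat.Partrec.Code i)

open Nat.Partrec (Code)
open Nat.Partrec.Code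

namespace QGNPad

/-- list membership as a Bool -/
def memb (x : ℕ) : List ℕ → Bool
  | [] => false
  | y :: l => cond (y == x) true (memb x l)

theorem memb_iff {x : ℕ} {l : List ℕ} : memb x l = true ↔ x ∈ l := by
  induction l with
  | nil => simp [memb]
  | cons y l ih =>
    by_cases hyx : y = x
    · simp [memb, hyx]
    · have : (y == x) = false := by simpa using hyx
      simp [memb, this, ih, List.mem_cons, Ne.symm hyx]

theorem memb_primrec : Primrec₂ memb := by
  have : Primrec fun a : ℕ × List ℕ =>
      List.rec (motive := fun _ => Bool) false
        (fun b l ih => cond (b == a.1) true ih) a.2 := by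
    refine Primrec.list_rec (f := fun a : ℕ × List ℕ => a.2)
      (g := fun _ => false)
      (h := fun a t => cond (t.1 == a.1) true t.2.2) Primrec.snd (Primrec.const false) ?_
    exact Primrec.cond (Primrec.beq.comp (Primrec.fst.comp Primrec.snd)
        (Primrec.fst.comp Primrec.fst)) (Primrec.const true)
      (Primrec.snd.comp (Primrec.snd.comp Primrec.snd))
  refine this.to₂.of_eq ?_
  intro x l
  induction l with
  | nil => rfl
  | cons y l ih => simpa [memb] using congrArg (cond (y == x) true) ih

/-- Bool-valued Nodup test -/
def nodupb : List ℕ → Bool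
  | [] => true
  | y :: l => cond (memb y l) false (nodupb l)

theorem nodupb_iff {l : List ℕ} : nodupb l = true ↔ l.Nodup := by
  induction l with
  | nil => simp [nodupb]
  | cons y l ih =>
    by_cases hm : y ∈ l
    · have : memb y l = true := memb_iff.2 hm
      simp [nodupb, this, List.nodup_cons, hm]
    · have : memb y l = false := by
        cases h : memb y l
        · rfl
        · exact absurd (memb_iff.1 h) hm
      simp [nodupb, this, List.nodup_cons, hm, ih]

theorem nodupb_primrec : Primrec nodupb := by
  have : Primrec fun a : List ℕ =>
      List.rec (motive := fun _ => Bool) true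
        (fun b l ih => cond (memb b l) false ih) a := by
    refine Primrec.list_rec (f := fun a : List ℕ => a) (g := fun _ => true)
      (h := fun _ t => cond (memb t.1 t.2.1) false t.2.2) Primrec.id (Primrec.const true) ?_
    exact Primrec.cond (memb_primrec.comp (Primrec.fst.comp Primrec.snd)
        (Primrec.fst.comp (Primrec.snd.comp Primrec.snd))) (Primrec.const false)
      (Primrec.snd.comp (Primrec.snd.comp Primrec.snd))
  refine this.of_eq ?_
  intro l
  induction l with
  | nil => rfl
  | cons y l ih => simpa [nodupb] using congrArg (cond (memb y l) false) ih

/-- pick the first element of `L` that is not in `l` (0 if none). -/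
def pick : List ℕ → List ℕ → ℕ
  | [], _ => 0
  | y :: L, l => cond (memb y l) (pick L l) y

theorem pick_spec {L l : List ℕ} (h : ∃ x ∈ L, x ∉ l) : pick L l ∈ L ∧ pick L l ∉ l := by
  induction L with
  | nil => rcases h with ⟨x, hx, _⟩; exact absurd hx List.not_mem_nil
  | cons y L ih =>
    by_cases hy : y ∈ l
    · have hm : memb y l = true := memb_iff.2 hy
      have h' : ∃ x ∈ L, x ∉ l := by
        rcases h with ⟨x, hx, hxl⟩
        rcases List.mem_cons.1 hx with rfl | hx'
        · exact absurd hy hxl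
        · exact ⟨x, hx', hxl⟩
      have H := ih h'
      have hp : pick (y :: L) l = pick L l := by simp [pick, hm]
      rw [hp]
      exact ⟨List.mem_cons_of_mem _ H.1, H.2⟩
    · have hm : memb y l = false := by
        cases hmm : memb y l
        · rfl
        · exact absurd (memb_iff.1 hmm) hy
      have hp : pick (y :: L) l = y := by simp [pick, hm]
      rw [hp]
      exact ⟨List.mem_cons_self, hy⟩

theorem pick_primrec : Primrec₂ pick := by
  have : Primrec fun a : List ℕ × List ℕ =>
      List.rec (motive := fun _ => ℕ) 0
        (fun b L ih => cond (memb b a.2) ih b) a.1 := by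
    refine Primrec.list_rec (f := fun a : List ℕ × List ℕ => a.1) (g := fun _ => 0)
      (h := fun a t => cond (memb t.1 a.2) t.2.2 t.1) Primrec.fst (Primrec.const 0) ?_
    exact Primrec.cond (memb_primrec.comp (Primrec.fst.comp Primrec.snd)
        (Primrec.snd.comp Primrec.fst))
      (Primrec.snd.comp (Primrec.snd.comp Primrec.snd)) (Primrec.fst.comp Primrec.snd)
  refine this.to₂.of_eq ?_
  intro L l
  induction L with
  | nil => rfl
  | cons y L ih => simpa [pick] using congrArg (fun z => cond (memb y l) z y) ih

theorem exists_not_mem {L l : List ℕ} (hnd : L.Nodup) (hlen : l.length < L.length) :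
    ∃ x ∈ L, x ∉ l := by
  by_contra hc
  push_neg at hc
  have h1 : L.toFinset ⊆ l.toFinset := fun x hx =>
    List.mem_toFinset.2 (hc x (List.mem_toFinset.1 hx))
  have h2 := Finset.card_le_card h1
  rw [List.toFinset_card_of_nodup hnd] at h2
  exact absurd (h2.trans l.toFinset_card_le) (by omega)

/-- the block of `v`-values of the `n+2` nodes attached to block id `m1 = pair i n`. -/
def blk (v : ℕ → ℕ) (c : Code) (m1 : ℕ) : List ℕ :=
  Nat.rec [] (fun b ih => ih ++ [v (Encodable.encode (curry c (Nat.pair m1 b)))])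
    (m1.unpair.2 + 2)

theorem blk_eq (v : ℕ → ℕ) (c : Code) (m1 : ℕ) :
    blk v c m1 = (List.range (m1.unpair.2 + 2)).map
      (fun b => v (Encodable.encode (curry c (Nat.pair m1 b)))) := by
  suffices H : ∀ k, (Nat.rec [] (fun b ih =>
      ih ++ [v (Encodable.encode (curry c (Nat.pair m1 b)))]) k : List ℕ) =
      (List.range k).map (fun b => v (Encodable.encode (curry c (Nat.pair m1 b)))) by
    unfold blk; exact H ((Nat.unpair m1).2 + 2)
  intro k
  induction k with
  | zero => rfl
  | succ k ih =>
    show (Nat.rec [] _ k : List ℕ) ++ _ = _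
    rw [ih, List.range_succ, List.map_append]
    rfl

theorem blk_computable {v : ℕ → ℕ} (hv : Computable v) :
    Computable fun p : Code × ℕ => blk v p.1 p.2 := by
  have hf : Computable fun p : Code × ℕ => p.2.unpair.2 + 2 :=
    (Primrec.succ.comp (Primrec.succ.comp
      (Primrec.snd.comp (Primrec.unpair.comp Primrec.snd)))).to_comp
  have hcv : Computable fun x : (Code × ℕ) × ℕ × List ℕ =>
      v (Encodable.encode (curry x.1.1 (Nat.pair x.1.2 x.2.1))) :=
    hv.comp ((Primrec.encode.comp (primrec₂_curry.comp (Primrec.fst.comp Primrec.fst)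
      (Primrec₂.natPair.comp (Primrec.snd.comp Primrec.fst)
        (Primrec.fst.comp Primrec.snd)))).to_comp)
  have hh : Computable₂ fun (p : Code × ℕ) (q : ℕ × List ℕ) =>
      q.2 ++ [v (Encodable.encode (curry p.1 (Nat.pair p.2 q.1)))] :=
    (Computable.list_concat.comp (Computable.snd.comp Computable.snd) hcv).to₂
  exact (Computable.nat_rec hf (Computable.const ([] : List ℕ)) hh).of_eq fun p => rfl

attribute [irreducible] memb nodupb pick blk

/-- the function used in the fixed-point argument -/
def fAux (v : ℕ → ℕ) (U : ℕ →. ℕ) (c : Code) (nx : ℕ) : Part ℕ :=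
  Option.casesOn (motive := fun _ => Part ℕ)
    (cond (nodupb (blk v c nx.unpair.1.unpair.1))
      (some (Nat.pair nx.unpair.1.unpair.1.unpair.1 nx.unpair.2))
      none)
    (Part.some nx.unpair.1.unpair.2) U

theorem fAux_eq (v : ℕ → ℕ) (U : ℕ →. ℕ) (c : Code) (m x : ℕ) :
    fAux v U c (Nat.pair m x) =
      cond (nodupb (blk v c m.unpair.1))
        (U (Nat.pair m.unpair.1.unpair.1 x)) (Part.some m.unpair.2) := by
  unfold fAux
  rw [Nat.unpair_pair]
  cases nodupb (blk v c m.unpair.1) <;> rfl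

theorem fAux_partrec {v : ℕ → ℕ} (hv : Computable v) {U : ℕ →. ℕ} (hU : Partrec U) :
    Partrec₂ (fAux v U) := by
  have hm1 : Primrec fun p : Code × ℕ => p.2.unpair.1.unpair.1 :=
    Primrec.fst.comp (Primrec.unpair.comp (Primrec.fst.comp
      (Primrec.unpair.comp Primrec.snd)))
  have hi : Primrec fun p : Code × ℕ => p.2.unpair.1.unpair.1.unpair.1 :=
    Primrec.fst.comp (Primrec.unpair.comp hm1)
  have hx : Primrec fun p : Code × ℕ => p.2.unpair.2 :=
    Primrec.snd.comp (Primrec.unpair.comp Primrec.snd)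
  have hq : Primrec fun p : Code × ℕ =>
      Nat.pair p.2.unpair.1.unpair.1.unpair.1 p.2.unpair.2 :=
    Primrec₂.natPair.comp hi hx
  have hb : Computable fun p : Code × ℕ => nodupb (blk v p.1 p.2.unpair.1.unpair.1) :=
    nodupb_primrec.to_comp.comp ((blk_computable hv).comp
      (Computable.fst.pair hm1.to_comp))
  have ho : Computable fun p : Code × ℕ =>
      cond (nodupb (blk v p.1 p.2.unpair.1.unpair.1))
        (some (Nat.pair p.2.unpair.1.unpair.1.unpair.1 p.2.unpair.2))
        (none : Option ℕ) :=
    Computable.cond hb (Computable.option_some.comp hq.to_comp)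
      (Computable.const none)
  have hf0 : Computable fun p : Code × ℕ => p.2.unpair.1.unpair.2 :=
    (Primrec.snd.comp (Primrec.unpair.comp (Primrec.fst.comp
      (Primrec.unpair.comp Primrec.snd)))).to_comp
  have hg : Partrec₂ fun (_ : Code × ℕ) (q : ℕ) => U q :=
    (hU.comp Computable.snd).to₂
  exact (Partrec.optionCasesOn_right ho hf0 hg).of_eq fun p => rfl



/-- the partial function `(i,x) ↦ θ i x` recovered from the QGN1 enumeration `h`. -/
def Ufun (h : ℕ → ℕ) : ℕ →. ℕ := fun q =>
  (Nat.rfind fun s => Part.some (cond ((h s).unpair.1 == q)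
      (cond ((h s).unpair.2 == 0) false true) false)).map
    fun s => (h s).unpair.2 - 1

theorem Ufun_partrec {h : ℕ → ℕ} (hh : Computable h) : Partrec (Ufun h) := by
  have h1 : Computable fun p : ℕ × ℕ => (h p.2).unpair.1 :=
    (Primrec.fst.comp Primrec.unpair).to_comp.comp (hh.comp Computable.snd)
  have h2 : Computable fun p : ℕ × ℕ => (h p.2).unpair.2 :=
    (Primrec.snd.comp Primrec.unpair).to_comp.comp (hh.comp Computable.snd)
  have hb1 : Computable fun p : ℕ × ℕ => (h p.2).unpair.1 == p.1 :=
    Primrec.beq.to_comp.comp h1 Computable.fst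
  have hb2 : Computable fun p : ℕ × ℕ => (h p.2).unpair.2 == 0 :=
    Primrec.beq.to_comp.comp h2 (Computable.const 0)
  have hc : Computable₂ fun (q s : ℕ) => cond ((h s).unpair.1 == q)
      (cond ((h s).unpair.2 == 0) false true) false :=
    (Computable.cond hb1 (Computable.cond hb2 (Computable.const false)
      (Computable.const true)) (Computable.const false)).to₂
  have hr : Partrec fun q : ℕ => Nat.rfind fun s => Part.some (cond ((h s).unpair.1 == q)
      (cond ((h s).unpair.2 == 0) false true) false) :=
    Partrec.rfind hc.partrec₂
  have hm : Computable₂ fun (_ s : ℕ) => (h s).unpair.2 - 1 :=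
    ((Primrec.pred.comp (Primrec.snd.comp Primrec.unpair)).to_comp.comp
      (hh.comp Computable.snd)).to₂
  exact hr.map hm

theorem Ufun_spec {θ : ℕ → ℕ →. ℕ} {h : ℕ → ℕ}
    (hrange : Set.range h = {n | ∃ w, n = Nat.pair w 0} ∪
      {n | ∃ i x z, θ i x = Part.some z ∧ n = Nat.pair (Nat.pair i x) (z + 1)}) :
    ∀ i x, Ufun h (Nat.pair i x) = θ i x := by
  intro i x
  have key : ∀ s : ℕ, (cond ((h s).unpair.1 == Nat.pair i x)
      (cond ((h s).unpair.2 == 0) false true) false) = true →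
      θ i x = Part.some ((h s).unpair.2 - 1) := by
    intro s hs
    have h1 : (h s).unpair.1 = Nat.pair i x := by
      by_contra hne
      rw [beq_eq_false_iff_ne.2 hne] at hs
      simp at hs
    have h2 : (h s).unpair.2 ≠ 0 := by
      intro h0
      rw [h1] at hs
      rw [(beq_iff_eq).2 h0] at hs
      simp at hs
    have hmem : h s ∈ Set.range h := Set.mem_range_self s
    rw [hrange] at hmem
    rcases hmem with ⟨w, hw⟩ | ⟨i', x', z, hz, hp⟩
    · rw [hw, Nat.unpair_pair] at h2
      exact absurd rfl h2
    · have e1 : (h s).unpair.1 = Nat.pair i' x' := by rw [hp, Nat.unpair_pair]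
      have e2 : (h s).unpair.2 = z + 1 := by rw [hp, Nat.unpair_pair]
      rw [h1] at e1
      obtain ⟨rfl, rfl⟩ := Nat.pair_eq_pair.1 e1.symm
      rw [e2]
      simpa using hz
  apply Part.ext
  intro zz
  constructor
  · intro hz
    obtain ⟨s, hsmem, hval⟩ := (Part.mem_map_iff _).1 hz
    have htrue := Nat.rfind_spec hsmem
    rw [Part.mem_some_iff] at htrue
    have := key s htrue.symm
    rw [← hval, this]
    exact Part.mem_some _
  · intro hz
    have hzeq : θ i x = Part.some zz := Part.eq_some_iff.2 hz
    have hmem : Nat.pair (Nat.pair i x) (zz + 1) ∈ Set.range h := by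
      rw [hrange]
      exact Or.inr ⟨i, x, zz, hzeq, rfl⟩
    obtain ⟨s0, hs0⟩ := hmem
    have hps0 : (cond ((h s0).unpair.1 == Nat.pair i x)
        (cond ((h s0).unpair.2 == 0) false true) false) = true := by
      rw [hs0, Nat.unpair_pair]
      simp
    have hdom : (Nat.rfind fun s => Part.some (cond ((h s).unpair.1 == Nat.pair i x)
        (cond ((h s).unpair.2 == 0) false true) false)).Dom := by
      refine Nat.rfind_dom.2 ?_
      exact ⟨s0, Part.mem_some_iff.2 hps0.symm, fun {m} _ => trivial⟩
    obtain ⟨s, hsmem⟩ := Part.dom_iff_mem.1 hdom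
    have htrue := Nat.rfind_spec hsmem
    rw [Part.mem_some_iff] at htrue
    have hθs := key s htrue.symm
    have : zz = (h s).unpair.2 - 1 := by
      have := hzeq.symm.trans hθs
      exact Part.some_inj.1 this
    exact (Part.mem_map_iff _).2 ⟨s, hsmem, this.symm⟩

/-- the uniform enumeration of extended graphs of `phi`. -/
def Kfun : ℕ → ℕ → ℕ := fun e n =>
  cond n.bodd
    (Option.casesOn (motive := fun _ => ℕ)
      (evaln n.div2.unpair.2 (Denumerable.ofNat Code e) n.div2.unpair.1)
      (Nat.pair 0 0) fun z => Nat.pair n.div2.unpair.1 (z + 1))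
    (Nat.pair n.div2 0)

theorem Kfun_computable : Computable₂ Kfun := by
  have hx : Primrec fun p : ℕ × ℕ => p.2.div2.unpair.1 :=
    Primrec.fst.comp (Primrec.unpair.comp (Primrec.nat_div2.comp Primrec.snd))
  have hs : Primrec fun p : ℕ × ℕ => p.2.div2.unpair.2 :=
    Primrec.snd.comp (Primrec.unpair.comp (Primrec.nat_div2.comp Primrec.snd))
  have hcode : Primrec fun p : ℕ × ℕ => Denumerable.ofNat Code p.1 :=
    (Primrec.ofNat Code).comp Primrec.fst
  have hev : Primrec fun p : ℕ × ℕ =>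
      evaln p.2.div2.unpair.2 (Denumerable.ofNat Code p.1) p.2.div2.unpair.1 :=
    primrec_evaln.comp ((hs.pair hcode).pair hx)
  have hcase : Primrec fun p : ℕ × ℕ =>
      Option.casesOn (motive := fun _ => ℕ)
        (evaln p.2.div2.unpair.2 (Denumerable.ofNat Code p.1) p.2.div2.unpair.1)
        (Nat.pair 0 0) fun z => Nat.pair p.2.div2.unpair.1 (z + 1) :=
    Primrec.option_casesOn hev (Primrec.const (Nat.pair 0 0))
      ((Primrec₂.natPair.comp (hx.comp Primrec.fst) (Primrec.succ.comp Primrec.snd)).to₂)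
  have hbodd : Primrec fun p : ℕ × ℕ => p.2.bodd :=
    Primrec.nat_bodd.comp Primrec.snd
  have helse : Primrec fun p : ℕ × ℕ => Nat.pair p.2.div2 0 :=
    Primrec₂.natPair.comp (Primrec.nat_div2.comp Primrec.snd) (Primrec.const 0)
  exact (Primrec.cond hbodd hcase helse).to₂.to_comp

theorem Kfun_range (e : ℕ) : Set.range (Kfun e) = graphE (phi e) := by
  ext y
  constructor
  · rintro ⟨n, rfl⟩
    cases hb : n.bodd
    · exact Or.inl ⟨n.div2, by simp [Kfun, hb]⟩
    · cases hev : evaln n.div2.unpair.2 (Denumerable.ofNat Code e) n.div2.unpair.1 with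
      | none => exact Or.inl ⟨0, by simp [Kfun, hb, hev]⟩
      | some z =>
        refine Or.inr ⟨n.div2.unpair.1, z, ?_, by simp [Kfun, hb, hev]⟩
        exact Part.eq_some_iff.2 (evaln_sound (by rw [hev]; exact Option.mem_def.2 rfl))
  · rintro (⟨w, rfl⟩ | ⟨x, z, hz, rfl⟩)
    · refine ⟨2 * w, ?_⟩
      have hb : (2 * w).bodd = false := by simp [Nat.bodd_mul]
      have hd : (2 * w).div2 = w := Nat.div2_bit0 w
      simp [Kfun, hb, hd]
    · have hzmem : z ∈ phi e x := by rw [hz]; exact Part.mem_some z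
      obtain ⟨s, hsv⟩ := evaln_complete.1 hzmem
      refine ⟨2 * Nat.pair x s + 1, ?_⟩
      have hb : (2 * Nat.pair x s + 1).bodd = true := by simp [Nat.bodd_add, Nat.bodd_mul]
      have hd : (2 * Nat.pair x s + 1).div2 = Nat.pair x s := Nat.div2_bit1 _
      have hsv' : evaln s (Denumerable.ofNat Code e) x = some z := Option.mem_def.1 hsv
      simp [Kfun, hb, hd, Nat.unpair_pair, hsv']

/-- greedy choice of a fresh block value -/
def stepF (v : ℕ → ℕ) (c : Code) (N : ℕ) (l : List ℕ) : ℕ :=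
  pick (blk v c (Nat.pair N.unpair.1 N)) l

/-- the list of previously chosen padding values -/
def LF (v : ℕ → ℕ) (c : Code) : ℕ → List ℕ :=
  fun N => Nat.rec [] (fun M ih => ih ++ [stepF v c M ih]) N

/-- the padding function -/
def pF (v : ℕ → ℕ) (c : Code) (i j : ℕ) : ℕ :=
  stepF v c (Nat.pair i j) (LF v c (Nat.pair i j))

theorem LF_succ (v : ℕ → ℕ) (c : Code) (N : ℕ) :
    LF v c (N + 1) = LF v c N ++ [stepF v c N (LF v c N)] := rfl

theorem stepF_computable {v : ℕ → ℕ} (hv : Computable v) (c : Code) :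
    Computable₂ (stepF v c) := by
  have hNN : Computable fun p : ℕ × List ℕ => Nat.pair p.1.unpair.1 p.1 :=
    (Primrec₂.natPair.comp ((Primrec.fst.comp Primrec.unpair).comp Primrec.fst)
      Primrec.fst).to_comp
  have h1 : Computable fun p : ℕ × List ℕ => blk v c (Nat.pair p.1.unpair.1 p.1) :=
    (blk_computable hv).comp ((Computable.const c).pair hNN)
  exact (pick_primrec.to_comp.comp h1 Computable.snd).to₂

theorem LF_computable {v : ℕ → ℕ} (hv : Computable v) (c : Code) :
    Computable (LF v c) := by
  have hh : Computable₂ fun (_ : ℕ) (q : ℕ × List ℕ) => q.2 ++ [stepF v c q.1 q.2] :=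
    (Computable.list_concat.comp (Computable.snd.comp Computable.snd)
      ((stepF_computable hv c).comp (Computable.fst.comp Computable.snd)
        (Computable.snd.comp Computable.snd))).to₂
  exact (Computable.nat_rec Computable.id (Computable.const ([] : List ℕ)) hh).of_eq
    fun n => rfl

theorem pF_computable {v : ℕ → ℕ} (hv : Computable v) (c : Code) :
    Computable₂ (pF v c) := by
  have hpair : Computable fun p : ℕ × ℕ => Nat.pair p.1 p.2 :=
    (Primrec₂.natPair.comp Primrec.fst Primrec.snd).to_comp
  exact ((stepF_computable hv c).comp hpair ((LF_computable hv c).comp hpair)).to₂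

end QGNPad

open QGNPad Nat.Partrec.Code in
/-- Padding Lemma: every quasi-Gödel numbering has a one-to-one padding function. -/
theorem padding_lemma (A : Set ℕ) (hAinf : A.Infinite) (hAce : CEset A)
    (θ : ℕ → ℕ →. ℕ) (hθ : QuasiGodel A θ) :
    ∃ p : ℕ → ℕ → ℕ, Computable₂ p ∧
      Function.Injective (fun n : ℕ × ℕ => p n.1 n.2) ∧
      ∀ i j, θ (p i j) = θ i := by
  obtain ⟨hrangeθ, hQ1, hQ2⟩ := hθ
  obtain ⟨h, hhc, hrange⟩ := hQ1
  have hUspec : ∀ i x, Ufun h (Nat.pair i x) = θ i x := Ufun_spec hrange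
  obtain ⟨v, hvc, hvspec⟩ := hQ2 Kfun Kfun_computable
  obtain ⟨c₀, hc₀⟩ := fixed_point₂ (fAux_partrec hvc (Ufun_partrec hhc))
  -- basic facts about the fixed point
  have hphi : ∀ m, phi (Encodable.encode (curry c₀ m)) =
      fun x => fAux v (Ufun h) c₀ (Nat.pair m x) := by
    intro m
    funext x
    show eval (Denumerable.ofNat Code (Encodable.encode (curry c₀ m))) x = _
    rw [Denumerable.ofNat_encode, eval_curry, hc₀]
  have hnode : ∀ m, θ (v (Encodable.encode (curry c₀ m))) =
      fun x => fAux v (Ufun h) c₀ (Nat.pair m x) := by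
    intro m
    have hSA : (fun x => fAux v (Ufun h) c₀ (Nat.pair m x)) ∈ SA A := by
      cases hnb : nodupb (blk v c₀ m.unpair.1) with
      | false =>
        refine Or.inl ⟨fun _ => m.unpair.2, Computable.const _, fun x => ?_⟩
        show fAux v (Ufun h) c₀ (Nat.pair m x) = Part.some m.unpair.2
        rw [fAux_eq, hnb]
        rfl
      | true =>
        have hfe : (fun x => fAux v (Ufun h) c₀ (Nat.pair m x)) =
            θ m.unpair.1.unpair.1 := by
          funext x
          rw [fAux_eq, hnb]
          exact hUspec _ _
        rw [hfe, ← hrangeθ]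
        exact Set.mem_range_self _
    have hrng : Set.range (Kfun (Encodable.encode (curry c₀ m))) =
        graphE (fun x => fAux v (Ufun h) c₀ (Nat.pair m x)) := by
      rw [Kfun_range, hphi m]
    exact hvspec _ _ hSA hrng
  have hblkmap : ∀ m1, blk v c₀ m1 = (List.range (m1.unpair.2 + 2)).map
      (fun b => v (Encodable.encode (curry c₀ (Nat.pair m1 b)))) := blk_eq v c₀
  have hdupfalse : ∀ m1 b, nodupb (blk v c₀ m1) = false →
      θ (v (Encodable.encode (curry c₀ (Nat.pair m1 b)))) = fun _ => Part.some b := by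
    intro m1 b hnb
    rw [hnode (Nat.pair m1 b)]
    funext x
    rw [fAux_eq]
    simp [Nat.unpair_pair, hnb]
  have hnodup : ∀ m1, (blk v c₀ m1).Nodup := by
    intro m1
    by_contra hnd
    have hnb : nodupb (blk v c₀ m1) = false := by
      cases hb : nodupb (blk v c₀ m1)
      · rfl
      · exact absurd (nodupb_iff.1 hb) hnd
    rw [hblkmap m1] at hnd
    have hninj : ¬ (∀ b ∈ List.range (m1.unpair.2 + 2), ∀ b' ∈ List.range (m1.unpair.2 + 2),
        v (Encodable.encode (curry c₀ (Nat.pair m1 b))) =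
          v (Encodable.encode (curry c₀ (Nat.pair m1 b'))) → b = b') := by
      intro hinj
      exact hnd (List.Nodup.map_on hinj List.nodup_range)
    push_neg at hninj
    obtain ⟨b, _, b', _, heq, hne⟩ := hninj
    have e1 := hdupfalse m1 b hnb
    have e2 := hdupfalse m1 b' hnb
    rw [heq] at e1
    rw [e2] at e1
    have hb0 := congrFun e1 0
    exact hne (Part.some_inj.1 hb0.symm)
  have hgood : ∀ m1 b, θ (v (Encodable.encode (curry c₀ (Nat.pair m1 b)))) =
      θ m1.unpair.1 := by
    intro m1 b
    have hnb : nodupb (blk v c₀ m1) = true := nodupb_iff.2 (hnodup m1)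
    rw [hnode (Nat.pair m1 b)]
    funext x
    rw [fAux_eq]
    simp [Nat.unpair_pair, hnb, hUspec]
  -- the padding construction
  have hlenL : ∀ N, (LF v c₀ N).length = N := by
    intro N
    induction N with
    | zero => rfl
    | succ N ih => rw [LF_succ]; simp [ih]
  have hfresh : ∀ N l, l.length < N + 2 →
      stepF v c₀ N l ∈ blk v c₀ (Nat.pair N.unpair.1 N) ∧ stepF v c₀ N l ∉ l := by
    intro N l hlen
    apply pick_spec
    apply exists_not_mem (hnodup _)
    rw [hblkmap, List.length_map, List.length_range, Nat.unpair_pair]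
    exact hlen
  have hmemL : ∀ M N, M < N → stepF v c₀ M (LF v c₀ M) ∈ LF v c₀ N := by
    intro M N hMN
    induction N with
    | zero => omega
    | succ N ih =>
      rw [LF_succ]
      rcases Nat.lt_succ_iff_lt_or_eq.1 hMN with h' | h'
      · exact List.mem_append.2 (Or.inl (ih h'))
      · subst h'
        exact List.mem_append.2 (Or.inr (List.mem_singleton.2 rfl))
  have hθp : ∀ i j, θ (pF v c₀ i j) = θ i := by
    intro i j
    have hl : (LF v c₀ (Nat.pair i j)).length < Nat.pair i j + 2 := by
      rw [hlenL]; omega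
    have hmem := (hfresh (Nat.pair i j) _ hl).1
    rw [hblkmap] at hmem
    obtain ⟨b, _, hbv⟩ := List.mem_map.1 hmem
    show θ (stepF v c₀ (Nat.pair i j) (LF v c₀ (Nat.pair i j))) = θ i
    rw [← hbv, hgood]
    simp [Nat.unpair_pair]
  have hkey : ∀ M N, M < N → stepF v c₀ M (LF v c₀ M) ≠ stepF v c₀ N (LF v c₀ N) := by
    intro M N hMN heq
    have h2 := (hfresh N (LF v c₀ N) (by rw [hlenL]; omega)).2
    exact h2 (heq ▸ hmemL M N hMN)
  refine ⟨pF v c₀, pF_computable hvc c₀, ?_, hθp⟩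
  intro a b hab
  simp only [pF] at hab
  have hNe : Nat.pair a.1 a.2 = Nat.pair b.1 b.2 := by
    rcases lt_trichotomy (Nat.pair a.1 a.2) (Nat.pair b.1 b.2) with hlt | heqq | hgt
    · exact absurd hab (hkey _ _ hlt)
    · exact heqq
    · exact absurd hab.symm (hkey _ _ hgt)
  obtain ⟨h1, h2⟩ := Nat.pair_eq_pair.1 hNe
  exact Prod.ext h1 h2
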